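/- Assume condition (∗) and that all the structures X_i, i ∈ I, are finite. Then the following are equivalent: (a) the sequence ⟨|X_i| : i ∈ I⟩ is finite-to-one (there is no infinite J ⊆ I with |X_i| = |X_j| for all i, j ∈ J); (b) there exist a well-founded relation ⟨A, R⟩ and a function θ : {X_i : i ∈ I} → A monotone with respect to monomorphisms such that for each a in the range of θ there is no ω*-sequence in I^θ_a. -/
import Mathlib


universe u v w

section Defs

variable {α : Type*} {β : Type*}

/-- `f` is a homomorphism from `⟨α, r⟩` to `⟨β, s⟩`. -/
def IsHom (r : α → α → Prop) (s : β → β → Prop) (f : α → β) : Prop :=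
  ∀ x y, r x y → s (f x) (f y)

/-- A condensation is a bijective homomorphism. -/
def IsCond (r : α → α → Prop) (s : β → β → Prop) (f : α → β) : Prop :=
  Function.Bijective f ∧ IsHom r s f

/-- A monomorphism is an injective homomorphism. -/
def IsMono (r : α → α → Prop) (s : β → β → Prop) (f : α → β) : Prop :=
  Function.Injective f ∧ IsHom r s f

/-- An isomorphism of binary structures. -/
def IsIso (r : α → α → Prop) (s : β → β → Prop) (f : α → β) : Prop :=
  Function.Bijective f ∧ ∀ x y, r x y ↔ s (f x) (f y)

/-- A binary structure is reversible iff every self-condensation is an automorphism. -/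
def Reversible (r : α → α → Prop) : Prop :=
  ∀ f : α → α, IsCond r r f → IsIso r r f

/-- A binary structure is connected iff it has exactly one component: it is nonempty and
the least equivalence relation containing `r` relates any two points. -/
def Connected (r : α → α → Prop) : Prop :=
  Nonempty α ∧ ∀ x y, Relation.EqvGen r x y

/-- The relation of the disjoint union of the structures `⟨X i, R i⟩`. -/
def unionRel {I : Type*} {X : I → Type*} (R : ∀ i, X i → X i → Prop) :
    (Σ i, X i) → (Σ i, X i) → Prop :=
  fun a b => ∃ h : a.1 = b.1, R b.1 (h ▸ a.2) b.2

end Defs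

/-- **Proposition (Statement 10).** Assume condition (∗) — `⟨X i, R i⟩`, `i ∈ I`, pairwise
disjoint (realized by a sigma type), connected and reversible binary structures — and that all
the `X i` are finite. Then the following are equivalent: (a) the sequence `⟨|X i| : i ∈ I⟩` is
finite-to-one; (b) there are a well-founded relation `⟨A, W⟩` and a function `θ` on the
components, monotone with respect to monomorphisms, such that for each `a` in the range of `θ`
there is no ω*-sequence in `I^θ_a = {i : θ i = a}`. -/
theorem stmt10 {I : Type u} {X : I → Type v} (R : ∀ i, X i → X i → Prop)
    (hconn : ∀ i, Connected (R i)) (hrev : ∀ i, Reversible (R i))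
    (hfin : ∀ i, Finite (X i)) :
    (¬ ∃ J : Set I, J.Infinite ∧
        ∀ i ∈ J, ∀ j ∈ J, Cardinal.mk (X i) = Cardinal.mk (X j)) ↔
      (∃ (A : Type w) (W : A → A → Prop) (θ : I → A),
        (∀ S : Set A, S.Nonempty → ∃ a ∈ S, ∀ b ∈ S, ¬ W b a) ∧
        (∀ i j : I, (∃ F : X i → X j, IsMono (R i) (R j) F) → θ i = θ j ∨ W (θ i) (θ j)) ∧
        (∀ a ∈ Set.range θ, ¬ ∃ g : ℕ → I,
          Function.Injective g ∧ (∀ k, θ (g k) = a) ∧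
          ∀ k l : ℕ, k < l → ∃ F : X (g l) → X (g k), IsMono (R (g l)) (R (g k)) F)) := by
  classical
  constructor
  · intro hna
    refine ⟨ULift.{w} ℕ, fun a b => a.down < b.down, fun i => ⟨Nat.card (X i)⟩, ?_, ?_, ?_⟩
    · intro S hS
      exact (InvImage.wf ULift.down Nat.lt_wfRel.wf).has_min S hS
    · rintro i j ⟨F, hinj, -⟩
      haveI := hfin j
      have h := Nat.card_le_card_of_injective F hinj
      rcases h.lt_or_eq with h | h
      · exact Or.inr h
      · exact Or.inl (congrArg ULift.up h)
    · rintro a - ⟨g, hginj, hgθ, -⟩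
      refine hna ⟨Set.range g, Set.infinite_range_of_injective hginj, ?_⟩
      rintro i ⟨k, rfl⟩ j ⟨l, rfl⟩
      haveI := Fintype.ofFinite (X (g k))
      haveI := Fintype.ofFinite (X (g l))
      have hk : Nat.card (X (g k)) = Nat.card (X (g l)) :=
        congrArg ULift.down ((hgθ k).trans (hgθ l).symm)
      rw [Nat.card_eq_fintype_card, Nat.card_eq_fintype_card] at hk
      rw [Cardinal.mk_fintype, Cardinal.mk_fintype, hk]
  · rintro ⟨A, W, θ, hwf, hmono, hnoseq⟩ ⟨J, hJinf, hJeq⟩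
    obtain ⟨i0, hi0⟩ := hJinf.nonempty
    haveI := hfin i0
    haveI := Fintype.ofFinite (X i0)
    set n := Fintype.card (X i0) with hn
    have E : ∀ j : J, X (j : I) ≃ Fin n := fun j =>
      (Classical.choice (Cardinal.eq.mp (hJeq _ j.2 _ hi0))).trans (Fintype.equivFin _)
    set F : J → (Fin n → Fin n → Prop) :=
      fun j => fun a b => R j ((E j).symm a) ((E j).symm b) with hF
    haveI : Infinite J := hJinf.to_subtype
    obtain ⟨y, hy⟩ := Finite.exists_infinite_fiber F
    have hm : ∀ u v : ↥(F ⁻¹' {y}), ∃ G : X ((u : J) : I) → X ((v : J) : I),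
        IsMono (R ((u : J) : I)) (R ((v : J) : I)) G := by
      intro u v
      have huv : F u = F v := by
        have hu : F u = y := u.2
        have hv : F v = y := v.2
        rw [hu, hv]
      refine ⟨fun x => (E v).symm ((E u) x), ?_, ?_⟩
      · intro x y' h
        exact (E u).injective ((E v).symm.injective h)
      · intro x y' hr
        have h1 : F u ((E u) x) ((E u) y') := by
          simp only [hF, Equiv.symm_apply_apply]
          exact hr
        rw [huv] at h1
        exact h1
    have hconst : ∀ u v : ↥(F ⁻¹' {y}), θ ((u : J) : I) = θ ((v : J) : I) := by
      intro u v
      rcases hmono _ _ (hm u v) with h1 | h1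
      · exact h1
      rcases hmono _ _ (hm v u) with h2 | h2
      · exact h2.symm
      obtain ⟨a, haS, hmin⟩ := hwf {θ ((u : J) : I), θ ((v : J) : I)} ⟨_, Or.inl rfl⟩
      rcases haS with rfl | rfl
      · exact absurd h2 (hmin _ (Or.inr rfl))
      · exact absurd h1 (hmin _ (Or.inl rfl))
    haveI := hy
    let g0 : ℕ ↪ ↥(F ⁻¹' {y}) := Infinite.natEmbedding _
    let g : ℕ → I := fun k => ((g0 k : J) : I)
    have hginj : Function.Injective g := fun k l h =>
      g0.injective (Subtype.ext (Subtype.ext h))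
    exact hnoseq (θ (g 0)) ⟨g 0, rfl⟩
      ⟨g, hginj, fun k => hconst (g0 k) (g0 0), fun k l _ => hm (g0 l) (g0 k)⟩
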